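/- Asymptotic variance of the MM scatter estimator in the SUR model (Theorem 2, scatter part). Let ρ₀, ρ₁ be ρ-functions, 0 < δ₀ < ρ₀(c₀), ψ_ℓ = ρ_ℓ'. Assume γ₀ := E[ψ₀(‖E‖_Σ)‖E‖_Σ] ≠ 0 and π₁ := (1/(m+2)) E[(m+1) ψ₁(‖E‖_Σ)‖E‖_Σ + ψ₁'(‖E‖_Σ)‖E‖_Σ²] ≠ 0. Define M(e) = (m/π₁) ψ₁(‖e‖_Σ) ‖e‖_Σ (e eᵀ/‖e‖_Σ² − Σ/m) + (2/γ₀)(ρ₀(‖e‖_Σ) − δ₀) Σ for e ∈ ℝ^m, e ≠ 0 (and M(0) := (2/γ₀)(−δ₀)Σ). Let vec denote column-stacking of m×m matrices into ℝ^{m²}, ⊗ the Kronecker product, and K_m the m²×m² commutation matrix determined by K_m vec(A) = vec(Aᵀ) for all A ∈ ℝ^{m×m}. Then E[vec(M(E)) vec(M(E))ᵀ] = σ₁ (I_{m²} + K_m)(Σ ⊗ Σ) + σ₂ vec(Σ) vec(Σ)ᵀ, where σ₁ = (m/(π₁²(m+2))) E[ψ₁(‖E‖_Σ)² ‖E‖_Σ²]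 and σ₂ = (4/γ₀²) E[(ρ₀(‖E‖_Σ) − δ₀)²] − (2/m) σ₁. -/

import Mathlib

open MeasureTheory Matrix Kronecker

noncomputable section

/-- A ρ-function with tuning constant `c`. -/
def IsRhoFunction (ρ : ℝ → ℝ) (c : ℝ) : Prop :=
  0 < c ∧ (∀ u, ρ (-u) = ρ u) ∧ ContDiff ℝ 2 ρ ∧ ρ 0 = 0 ∧
    StrictMonoOn ρ (Set.Icc 0 c) ∧ ∀ u, c ≤ u → ρ u = ρ c

/-- `‖a‖_C = √(aᵀ C⁻¹ a)`. -/
def mnorm {m : ℕ} (C : Matrix (Fin m) (Fin m) ℝ) (a : Fin m → ℝ) : ℝ :=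
  Real.sqrt (a ⬝ᵥ C⁻¹.mulVec a)

/-- Orthogonal invariance of a measure on `ℝ^m`. -/
def OrthoInvariant {m : ℕ} (μ : Measure (Fin m → ℝ)) : Prop :=
  ∀ O : Matrix (Fin m) (Fin m) ℝ, Oᵀ * O = 1 → μ.map O.mulVec = μ

/-- Column-stacking `vec` of an `m × m` matrix, with entry `A i j` at index `(i, j)`. -/
def vecm {m : ℕ} (A : Matrix (Fin m) (Fin m) ℝ) : Fin m × Fin m → ℝ :=
  fun q => A q.1 q.2


namespace MMaux

variable {m : ℕ}

lemma dot_self_nonneg (z : Fin m → ℝ) : 0 ≤ z ⬝ᵥ z :=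
  Finset.sum_nonneg fun i _ => mul_self_nonneg _

lemma dot_self_eq_zero {z : Fin m → ℝ} : z ⬝ᵥ z = 0 ↔ z = 0 :=
  dotProduct_self_eq_zero

lemma measurable_dot : Measurable (fun z : Fin m → ℝ => z ⬝ᵥ z) := by
  apply Finset.measurable_sum
  intro i _
  exact (measurable_pi_apply i).mul (measurable_pi_apply i)

lemma measurable_mulVec (O : Matrix (Fin m) (Fin m) ℝ) : Measurable O.mulVec := by
  apply measurable_pi_lambda
  intro i
  simp only [Matrix.mulVec, dotProduct]
  apply Finset.measurable_sum
  intro j _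
  exact (measurable_pi_apply j).const_mul _

lemma dot_orth {O : Matrix (Fin m) (Fin m) ℝ} (hO : Oᵀ * O = 1) (z : Fin m → ℝ) :
    (O.mulVec z) ⬝ᵥ (O.mulVec z) = z ⬝ᵥ z := by
  rw [Matrix.dotProduct_mulVec, ← Matrix.vecMul_transpose, Matrix.vecMul_vecMul, hO,
    Matrix.vecMul_one]

lemma integral_orth (ν : Measure (Fin m → ℝ)) (hν : ∀ O : Matrix (Fin m) (Fin m) ℝ,
      Oᵀ * O = 1 → ν.map O.mulVec = ν)
    {O : Matrix (Fin m) (Fin m) ℝ} (hO : Oᵀ * O = 1) {g : (Fin m → ℝ) → ℝ}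
    (hg : Measurable g) :
    ∫ z, g (O.mulVec z) ∂ν = ∫ z, g z ∂ν := by
  conv_rhs => rw [← hν O hO]
  rw [integral_map (measurable_mulVec O).aemeasurable]
  rw [hν O hO]
  exact hg.aestronglyMeasurable




/-- The normalized quadratic kernel. -/
def Q (p q : Fin m) (z : Fin m → ℝ) : ℝ := z p * z q * (z ⬝ᵥ z)⁻¹

def chi (z : Fin m → ℝ) : ℝ := if z ⬝ᵥ z = 0 then 0 else 1

lemma sq_le_dot (z : Fin m → ℝ) (p : Fin m) : z p * z p ≤ z ⬝ᵥ z :=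
  Finset.single_le_sum (fun i _ => mul_self_nonneg (z i)) (Finset.mem_univ p)

lemma abs_Q_le_one (p q : Fin m) (z : Fin m → ℝ) : |Q p q z| ≤ 1 := by
  unfold Q
  rcases eq_or_ne (z ⬝ᵥ z) 0 with h | h
  · simp [h]
  · have hpos : 0 < z ⬝ᵥ z := lt_of_le_of_ne (Finset.sum_nonneg fun i _ => mul_self_nonneg _) (Ne.symm h)
    rw [abs_mul, abs_inv, abs_of_pos hpos]
    rw [inv_eq_one_div, mul_div_assoc' ]
    rw [div_le_one hpos]
    have h1 : |z p * z q| ≤ (z p * z p + z q * z q) / 2 := by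
      rw [abs_mul]
      nlinarith [abs_nonneg (z p), abs_nonneg (z q), sq_abs (z p), sq_abs (z q),
        sq_nonneg (|z p| - |z q|)]
    calc |z p * z q| * 1 = |z p * z q| := mul_one _
      _ ≤ (z p * z p + z q * z q) / 2 := h1
      _ ≤ z ⬝ᵥ z := by
          have := sq_le_dot z p
          have := sq_le_dot z q
          linarith

lemma measurable_Q (p q : Fin m) : Measurable (Q p q) :=
  ((measurable_pi_apply p).mul (measurable_pi_apply q)).mul measurable_dot.inv

lemma measurable_chi : Measurable (chi (m := m)) := by
  unfold chi
  exact Measurable.ite (measurable_dot (measurableSet_singleton 0)) measurable_const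
    measurable_const

lemma abs_chi_le_one (z : Fin m → ℝ) : |chi z| ≤ 1 := by
  unfold chi; split <;> simp

/-- sign flip matrix -/
def flipM (i : Fin m) : Matrix (Fin m) (Fin m) ℝ :=
  Matrix.diagonal (fun p => if p = i then (-1 : ℝ) else 1)

lemma flipM_orth (i : Fin m) : (flipM i)ᵀ * flipM i = 1 := by
  unfold flipM
  rw [Matrix.diagonal_transpose, Matrix.diagonal_mul_diagonal]
  convert Matrix.diagonal_one
  rename_i p
  by_cases h : p = i <;> simp [h]

lemma flipM_mulVec (i : Fin m) (z : Fin m → ℝ) :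
    (flipM i).mulVec z = fun p => (if p = i then (-1:ℝ) else 1) * z p := by
  funext p
  simp [flipM, Matrix.mulVec_diagonal]

/-- permutation matrix -/
def permM (σ : Equiv.Perm (Fin m)) : Matrix (Fin m) (Fin m) ℝ :=
  Matrix.of fun a b => if σ b = a then 1 else 0

lemma permM_mulVec (σ : Equiv.Perm (Fin m)) (z : Fin m → ℝ) :
    (permM σ).mulVec z = fun a => z (σ.symm a) := by
  funext a
  simp only [permM, Matrix.mulVec, dotProduct, Matrix.of_apply]
  have : ∀ b : Fin m, (if σ b = a then (1:ℝ) else 0) * z b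
      = if b = σ.symm a then z b else 0 := by
    intro b
    by_cases h : σ b = a
    · subst h; simp [Equiv.symm_apply_apply]
    · have : b ≠ σ.symm a := by
        intro hb; exact h (by rw [hb, Equiv.apply_symm_apply])
      simp [h, this]
  rw [Finset.sum_congr rfl fun b _ => this b, Finset.sum_ite_eq' Finset.univ (σ.symm a)]
  simp

lemma permM_orth (σ : Equiv.Perm (Fin m)) : (permM σ)ᵀ * permM σ = 1 := by
  ext b c
  simp only [Matrix.mul_apply, Matrix.transpose_apply, permM, Matrix.of_apply]
  have : ∀ a : Fin m, (if σ b = a then (1:ℝ) else 0) * (if σ c = a then 1 else 0)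
      = if a = σ b then (if σ c = a then (1:ℝ) else 0) else 0 := by
    intro a; by_cases h : σ b = a <;> simp [h, eq_comm (a := a)]
  rw [Finset.sum_congr rfl fun a _ => this a, Finset.sum_ite_eq' Finset.univ (σ b)]
  by_cases h : b = c
  · simp [h, Matrix.one_apply]
  · have : σ c ≠ σ b := fun hc => h (σ.injective hc).symm
    simp [Matrix.one_apply, h, this]



def rs : ℝ := (Real.sqrt 2)⁻¹

lemma rs_mul_rs : rs * rs = 1/2 := by
  unfold rs
  rw [← mul_inv, Real.mul_self_sqrt (by norm_num)]
  norm_num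

/-- rotation by 45° in the (i,j) plane -/
def rotM (i j : Fin m) : Matrix (Fin m) (Fin m) ℝ :=
  Matrix.of fun a b =>
    if a = i then (if b = i then rs else if b = j then -rs else 0)
    else if a = j then (if b = i then rs else if b = j then rs else 0)
    else if b = a then 1 else 0

lemma rotM_mulVec (i j : Fin m) (hij : i ≠ j) (z : Fin m → ℝ) :
    (rotM i j).mulVec z = fun a =>
      if a = i then rs * z i - rs * z j else if a = j then rs * z i + rs * z j else z a := by
  funext a
  simp only [Matrix.mulVec, dotProduct]
  by_cases hai : a = i
  · subst hai
    simp only [rotM, Matrix.of_apply, eq_self_iff_true, if_true]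
    have : ∀ b : Fin m, (if b = a then rs else if b = j then -rs else 0) * z b
        = (if b = a then rs * z b else 0) + (if b = j then -(rs * z b) else 0) := by
      intro b
      by_cases hbi : b = a
      · subst hbi
        simp [fun h : b = j => hij h]
      · by_cases hbj : b = j
        · subst hbj; simp [hbi]
        · simp [hbi, hbj]
    rw [Finset.sum_congr rfl fun b _ => this b, Finset.sum_add_distrib,
      Finset.sum_ite_eq' Finset.univ a (fun b => rs * z b),
      Finset.sum_ite_eq' Finset.univ j (fun b => -(rs * z b))]
    simp [sub_eq_add_neg]
  · by_cases haj : a = j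
    · subst haj
      simp only [rotM, Matrix.of_apply, if_neg hai, eq_self_iff_true, if_true]
      have : ∀ b : Fin m, (if b = i then rs else if b = a then rs else 0) * z b
          = (if b = i then rs * z b else 0) + (if b = a then rs * z b else 0) := by
        intro b
        by_cases hbi : b = i
        · subst hbi
          simp [hij]
        · by_cases hba : b = a
          · subst hba; simp [hbi]
          · simp [hbi, hba]
      rw [Finset.sum_congr rfl fun b _ => this b, Finset.sum_add_distrib,
        Finset.sum_ite_eq' Finset.univ i (fun b => rs * z b),
        Finset.sum_ite_eq' Finset.univ a (fun b => rs * z b)]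
      simp
    · simp only [rotM, Matrix.of_apply, if_neg hai, if_neg haj]
      have : ∀ b : Fin m, (if b = a then (1:ℝ) else 0) * z b = if b = a then z b else 0 := by
        intro b; by_cases hba : b = a <;> simp [hba]
      rw [Finset.sum_congr rfl fun b _ => this b, Finset.sum_ite_eq' Finset.univ a z]
      simp

lemma rotM_orth (i j : Fin m) (hij : i ≠ j) : (rotM i j)ᵀ * rotM i j = 1 := by
  have hs2 := rs_mul_rs
  ext b c
  simp only [Matrix.mul_apply, Matrix.transpose_apply]
  have hsplit : ∀ g : Fin m → ℝ,
      ∑ a, g a = g i + (g j + ∑ a ∈ (Finset.univ.erase i).erase j, g a) := by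
    intro g
    rw [← Finset.add_sum_erase Finset.univ g (Finset.mem_univ i),
      ← Finset.add_sum_erase (Finset.univ.erase i) g
        (Finset.mem_erase.mpr ⟨hij.symm, Finset.mem_univ j⟩)]
  rw [hsplit]
  have hOrow : ∀ a b : Fin m, a ≠ i → a ≠ j → rotM i j a b = if b = a then (1:ℝ) else 0 := by
    intro a b hai haj
    simp [rotM, hai, haj]
  have hrest0 : ∀ b' c' : Fin m, (b' = i ∨ b' = j) →
      (∑ a ∈ (Finset.univ.erase i).erase j, rotM i j a b' * rotM i j a c') = 0 := by
    intro b' c' hb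
    apply Finset.sum_eq_zero
    intro a ha
    have hai : a ≠ i := (Finset.mem_erase.mp (Finset.mem_erase.mp ha).2).1
    have haj : a ≠ j := (Finset.mem_erase.mp ha).1
    rw [hOrow a b' hai haj]
    rcases hb with hb | hb <;> subst hb
    · rw [if_neg (fun h : b' = a => hai h.symm), zero_mul]
    · rw [if_neg (fun h : b' = a => haj h.symm), zero_mul]
  have hrest1 : ∀ b' c' : Fin m, b' ≠ i → b' ≠ j →
      (∑ a ∈ (Finset.univ.erase i).erase j, rotM i j a b' * rotM i j a c')
        = if c' = b' then (1:ℝ) else 0 := by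
    intro b' c' hbi hbj
    have hterm : ∀ a ∈ (Finset.univ.erase i).erase j, rotM i j a b' * rotM i j a c'
        = if a = b' then (if c' = a then (1:ℝ) else 0) else 0 := by
      intro a ha
      have hai : a ≠ i := (Finset.mem_erase.mp (Finset.mem_erase.mp ha).2).1
      have haj : a ≠ j := (Finset.mem_erase.mp ha).1
      rw [hOrow a b' hai haj, hOrow a c' hai haj]
      by_cases hba : b' = a
      · subst hba; simp [eq_comm]
      · have hab : a ≠ b' := fun h => hba h.symm
        simp [hba, hab]
    rw [Finset.sum_congr rfl hterm, Finset.sum_ite_eq' _ b']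
    have hb : b' ∈ (Finset.univ.erase i).erase j :=
      Finset.mem_erase.mpr ⟨hbj, Finset.mem_erase.mpr ⟨hbi, Finset.mem_univ b'⟩⟩
    simp [hb]
  by_cases hbi : b = i
  · subst hbi
    rw [hrest0 b c (Or.inl rfl)]
    simp only [rotM, Matrix.of_apply, Matrix.one_apply]
    split_ifs <;> subst_eqs <;> ring_nf <;> first | rfl | linarith | tauto
  · by_cases hbj : b = j
    · subst hbj
      rw [hrest0 b c (Or.inr rfl)]
      simp only [rotM, Matrix.of_apply, Matrix.one_apply]
      split_ifs <;> subst_eqs <;> ring_nf <;> first | rfl | linarith | tauto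
    · rw [hrest1 b c hbi hbj]
      simp only [rotM, Matrix.of_apply, Matrix.one_apply]
      split_ifs <;> subst_eqs <;> ring_nf <;> first | rfl | linarith | tauto



section moments
variable {m : ℕ} (ν : Measure (Fin m → ℝ)) [IsProbabilityMeasure ν]
variable (f : (Fin m → ℝ) → ℝ)

def Jint (p q : Fin m) : ℝ := ∫ z, f z * Q p q z ∂ν
def Tint (p q r s : Fin m) : ℝ := ∫ z, f z * Q p q z * Q r s z ∂ν
def Iint : ℝ := ∫ z, f z * chi z ∂ν

lemma abs_mul_le_of_le_one {a b C : ℝ} (ha : |a| ≤ C) (hb : |b| ≤ 1) : |a * b| ≤ C := by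
  rw [abs_mul]
  calc |a| * |b| ≤ |a| * 1 := mul_le_mul_of_nonneg_left hb (abs_nonneg a)
    _ = |a| := mul_one _
    _ ≤ C := ha

lemma integrable_of_bdd {g : (Fin m → ℝ) → ℝ} (hg : Measurable g) {C : ℝ}
    (hb : ∀ z, |g z| ≤ C) : Integrable g ν :=
  (integrable_const C).mono' hg.aestronglyMeasurable
    (Filter.Eventually.of_forall fun z => by simpa using hb z)

variable {C : ℝ}

lemma integrable_fQ (hfm : Measurable f) (hfb : ∀ z, |f z| ≤ C) (p q : Fin m) :
    Integrable (fun z => f z * Q p q z) ν :=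
  integrable_of_bdd ν (hfm.mul (measurable_Q p q))
    (fun z => abs_mul_le_of_le_one (hfb z) (abs_Q_le_one p q z))

lemma integrable_fQQ (hfm : Measurable f) (hfb : ∀ z, |f z| ≤ C) (p q r s : Fin m) :
    Integrable (fun z => f z * Q p q z * Q r s z) ν :=
  integrable_of_bdd ν ((hfm.mul (measurable_Q p q)).mul (measurable_Q r s))
    (fun z => abs_mul_le_of_le_one
      (abs_mul_le_of_le_one (hfb z) (abs_Q_le_one p q z)) (abs_Q_le_one r s z))

lemma Jperm (hν : ∀ O : Matrix (Fin m) (Fin m) ℝ, Oᵀ * O = 1 → ν.map O.mulVec = ν)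
    (hfm : Measurable f)
    (hfinv : ∀ z w : Fin m → ℝ, z ⬝ᵥ z = w ⬝ᵥ w → f z = f w)
    (σ : Equiv.Perm (Fin m)) (p q : Fin m) :
    Jint ν f (σ p) (σ q) = Jint ν f p q := by
  unfold Jint
  rw [← integral_orth ν hν (permM_orth σ) (g := fun z => f z * Q (σ p) (σ q) z) (hfm.mul (measurable_Q (σ p) (σ q)))]
  congr 1
  funext z
  rw [permM_mulVec]
  unfold Q
  have hd : (fun a => z (σ.symm a)) ⬝ᵥ (fun a => z (σ.symm a)) = z ⬝ᵥ z := by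
    unfold dotProduct
    exact Fintype.sum_equiv σ.symm _ _ (fun a => rfl)
  simp only [hfinv _ _ hd, hd, Equiv.symm_apply_apply]

lemma Jflip (hν : ∀ O : Matrix (Fin m) (Fin m) ℝ, Oᵀ * O = 1 → ν.map O.mulVec = ν)
    (hfm : Measurable f)
    (hfinv : ∀ z w : Fin m → ℝ, z ⬝ᵥ z = w ⬝ᵥ w → f z = f w)
    {p q : Fin m} (hpq : p ≠ q) : Jint ν f p q = 0 := by
  have h : Jint ν f p q = - Jint ν f p q := by
    unfold Jint
    conv_lhs => rw [← integral_orth ν hν (flipM_orth p) (g := fun z => f z * Q p q z) (hfm.mul (measurable_Q p q))]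
    rw [← integral_neg]
    congr 1
    funext z
    rw [flipM_mulVec]
    unfold Q
    have hd : (fun a => (if a = p then (-1:ℝ) else 1) * z a) ⬝ᵥ
        (fun a => (if a = p then (-1:ℝ) else 1) * z a) = z ⬝ᵥ z := by
      unfold dotProduct
      apply Finset.sum_congr rfl
      intro a _
      by_cases h : a = p <;> simp [h]
    simp only [hfinv _ _ hd, hd, eq_self_iff_true, if_true,
      if_neg (fun h : q = p => hpq h.symm)]
    ring
  linarith

lemma Jtrace (hfm : Measurable f) (hfb : ∀ z, |f z| ≤ C) :
    ∑ p, Jint ν f p p = Iint ν f := by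
  unfold Jint Iint
  rw [← integral_finset_sum _ (fun p _ => integrable_fQ ν f hfm hfb p p)]
  congr 1
  funext z
  rw [← Finset.mul_sum]
  congr 1
  unfold Q chi
  rw [← Finset.sum_mul]
  rcases eq_or_ne (z ⬝ᵥ z) 0 with h | h
  · simp [h]
  · rw [if_neg h]
    exact mul_inv_cancel₀ (by simpa only [dotProduct] using h)

lemma Jdiag (hν : ∀ O : Matrix (Fin m) (Fin m) ℝ, Oᵀ * O = 1 → ν.map O.mulVec = ν)
    (hfm : Measurable f)
    (hfinv : ∀ z w : Fin m → ℝ, z ⬝ᵥ z = w ⬝ᵥ w → f z = f w)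
    (hfb : ∀ z, |f z| ≤ C) (p : Fin m) :
    Jint ν f p p = Iint ν f / m := by
  have hall : ∀ q : Fin m, Jint ν f q q = Jint ν f p p := by
    intro q
    have := Jperm ν f hν hfm hfinv (Equiv.swap p q) p p
    simpa [Equiv.swap_apply_left] using this
  have hsum := Jtrace ν f hfm hfb
  rw [Finset.sum_congr rfl (fun q _ => hall q), Finset.sum_const, Finset.card_univ,
    Fintype.card_fin, nsmul_eq_mul] at hsum
  have hm : (m : ℝ) ≠ 0 := by
    have : 0 < m := Fin.pos p
    exact_mod_cast this.ne'
  rw [← hsum]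
  field_simp

lemma Jmaster (hν : ∀ O : Matrix (Fin m) (Fin m) ℝ, Oᵀ * O = 1 → ν.map O.mulVec = ν)
    (hfm : Measurable f)
    (hfinv : ∀ z w : Fin m → ℝ, z ⬝ᵥ z = w ⬝ᵥ w → f z = f w)
    (hfb : ∀ z, |f z| ≤ C) (p q : Fin m) :
    Jint ν f p q = (if p = q then (1:ℝ) else 0) * (Iint ν f / m) := by
  by_cases h : p = q
  · subst h; rw [if_pos rfl, one_mul]; exact Jdiag ν f hν hfm hfinv hfb p
  · rw [if_neg h, zero_mul]; exact Jflip ν f hν hfm hfinv h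

end moments

section tmoments
variable {m : ℕ} (ν : Measure (Fin m → ℝ)) [IsProbabilityMeasure ν]
variable (f : (Fin m → ℝ) → ℝ) {C : ℝ}

lemma Tswap12 (p q r s : Fin m) : Tint ν f p q r s = Tint ν f q p r s := by
  unfold Tint Q; congr 1; funext z; ring
lemma Tswap34 (p q r s : Fin m) : Tint ν f p q r s = Tint ν f p q s r := by
  unfold Tint Q; congr 1; funext z; ring
lemma Tswap13 (p q r s : Fin m) : Tint ν f p q r s = Tint ν f r q p s := by
  unfold Tint Q; congr 1; funext z; ring
lemma Tswap14 (p q r s : Fin m) : Tint ν f p q r s = Tint ν f s q r p := by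
  unfold Tint Q; congr 1; funext z; ring
lemma Tswap23 (p q r s : Fin m) : Tint ν f p q r s = Tint ν f p r q s := by
  unfold Tint Q; congr 1; funext z; ring
lemma Tswap24 (p q r s : Fin m) : Tint ν f p q r s = Tint ν f p s r q := by
  unfold Tint Q; congr 1; funext z; ring

lemma Tperm (hν : ∀ O : Matrix (Fin m) (Fin m) ℝ, Oᵀ * O = 1 → ν.map O.mulVec = ν)
    (hfm : Measurable f)
    (hfinv : ∀ z w : Fin m → ℝ, z ⬝ᵥ z = w ⬝ᵥ w → f z = f w)
    (σ : Equiv.Perm (Fin m)) (p q r s : Fin m) :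
    Tint ν f (σ p) (σ q) (σ r) (σ s) = Tint ν f p q r s := by
  unfold Tint
  rw [← integral_orth ν hν (permM_orth σ) (g := fun z => f z * Q (σ p) (σ q) z * Q (σ r) (σ s) z)
    ((hfm.mul (measurable_Q (σ p) (σ q))).mul (measurable_Q (σ r) (σ s)))]
  congr 1
  funext z
  rw [permM_mulVec]
  unfold Q
  have hd : (fun a => z (σ.symm a)) ⬝ᵥ (fun a => z (σ.symm a)) = z ⬝ᵥ z := by
    unfold dotProduct
    exact Fintype.sum_equiv σ.symm _ _ (fun a => rfl)
  simp only [hfinv _ _ hd, hd, Equiv.symm_apply_apply]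

lemma Tflip1 (hν : ∀ O : Matrix (Fin m) (Fin m) ℝ, Oᵀ * O = 1 → ν.map O.mulVec = ν)
    (hfm : Measurable f)
    (hfinv : ∀ z w : Fin m → ℝ, z ⬝ᵥ z = w ⬝ᵥ w → f z = f w)
    {p q r s : Fin m} (hq : q ≠ p) (hr : r ≠ p) (hs : s ≠ p) :
    Tint ν f p q r s = 0 := by
  have h : Tint ν f p q r s = - Tint ν f p q r s := by
    unfold Tint
    conv_lhs => rw [← integral_orth ν hν (flipM_orth p) (g := fun z => f z * Q p q z * Q r s z)
      ((hfm.mul (measurable_Q p q)).mul (measurable_Q r s))]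
    rw [← integral_neg]
    congr 1
    funext z
    rw [flipM_mulVec]
    unfold Q
    have hd : (fun a => (if a = p then (-1:ℝ) else 1) * z a) ⬝ᵥ
        (fun a => (if a = p then (-1:ℝ) else 1) * z a) = z ⬝ᵥ z := by
      unfold dotProduct
      apply Finset.sum_congr rfl
      intro a _
      by_cases h : a = p <;> simp [h]
    simp only [hfinv _ _ hd, hd, eq_self_iff_true, if_true, if_neg hq, if_neg hr, if_neg hs]
    ring
  linarith

lemma Ttrace (hν : ∀ O : Matrix (Fin m) (Fin m) ℝ, Oᵀ * O = 1 → ν.map O.mulVec = ν)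
    (hfm : Measurable f) (hfb : ∀ z, |f z| ≤ C) (p q : Fin m) :
    ∑ r, Tint ν f p q r r = Jint ν f p q := by
  unfold Tint Jint
  rw [← integral_finset_sum _ (fun r _ => integrable_fQQ ν f hfm hfb p q r r)]
  congr 1
  funext z
  rw [← Finset.mul_sum]
  rcases eq_or_ne (z ⬝ᵥ z) 0 with h | h
  · have hz : z = 0 := dotProduct_self_eq_zero.mp h
    subst hz
    simp [Q]
  · have hsum : ∑ r, Q r r z = 1 := by
      unfold Q
      rw [← Finset.sum_mul]
      exact mul_inv_cancel₀ (by simpa only [dotProduct] using h)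
    rw [hsum, mul_one]

lemma exists_perm_pair {p q p' q' : Fin m} (hpq : p ≠ q) (hpq' : p' ≠ q') :
    ∃ σ : Equiv.Perm (Fin m), σ p = p' ∧ σ q = q' := by
  classical
  refine ⟨(Equiv.swap p p').trans (Equiv.swap (Equiv.swap p p' q) q'), ?_, ?_⟩
  · simp only [Equiv.trans_apply, Equiv.swap_apply_left]
    apply Equiv.swap_apply_of_ne_of_ne
    · intro h
      have := (Equiv.swap p p').injective ((Equiv.swap_apply_left p p').trans h)
      exact hpq this
    · exact hpq'
  · simp only [Equiv.trans_apply, Equiv.swap_apply_left]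

end tmoments

section trot
variable {m : ℕ} (ν : Measure (Fin m → ℝ)) [IsProbabilityMeasure ν]
variable (f : (Fin m → ℝ) → ℝ) {C : ℝ}

lemma Trot (hν : ∀ O : Matrix (Fin m) (Fin m) ℝ, Oᵀ * O = 1 → ν.map O.mulVec = ν)
    (hfm : Measurable f)
    (hfinv : ∀ z w : Fin m → ℝ, z ⬝ᵥ z = w ⬝ᵥ w → f z = f w)
    (hfb : ∀ z, |f z| ≤ C) {i j : Fin m} (hij : i ≠ j) :
    Tint ν f i i i i = 3 * Tint ν f i i j j := by
  have hO := rotM_orth i j hij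
  have hgm : Measurable (fun z => f z * Q i i z * Q i i z) :=
    (hfm.mul (measurable_Q i i)).mul (measurable_Q i i)
  have h0 : Tint ν f i i i i
      = ∫ z, (fun w => f w * Q i i w * Q i i w) ((rotM i j).mulVec z) ∂ν :=
    (integral_orth ν hν hO hgm).symm
  have hpt : (fun z => (fun w => f w * Q i i w * Q i i w) ((rotM i j).mulVec z))
      = fun z => (1/4) * (f z * Q i i z * Q i i z) + ((-1) * (f z * Q i i z * Q i j z)
        + ((3/2) * (f z * Q i i z * Q j j z) + ((-1) * (f z * Q i j z * Q j j z)
        + (1/4) * (f z * Q j j z * Q j j z)))) := by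
    funext z
    have hd := dot_orth hO z
    simp only [Q]
    rw [hfinv _ _ hd, hd, rotM_mulVec i j hij]
    simp only [eq_self_iff_true, if_true]
    linear_combination (f z * (z i - z j)^4 * ((z ⬝ᵥ z)⁻¹)^2 * (rs * rs + 1/2)) * rs_mul_rs
  rw [hpt] at h0
  have i1 := integrable_fQQ ν f hfm hfb i i i i
  have i2 := integrable_fQQ ν f hfm hfb i i i j
  have i3 := integrable_fQQ ν f hfm hfb i i j j
  have i4 := integrable_fQQ ν f hfm hfb i j j j
  have i5 := integrable_fQQ ν f hfm hfb j j j j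
  have I5 : Integrable (fun z => (1:ℝ)/4 * (f z * Q j j z * Q j j z)) ν := i5.const_mul _
  have I45 : Integrable (fun z => -1 * (f z * Q i j z * Q j j z)
      + 1/4 * (f z * Q j j z * Q j j z)) ν := (i4.const_mul _).add I5
  have I345 : Integrable (fun z => 3/2 * (f z * Q i i z * Q j j z)
      + (-1 * (f z * Q i j z * Q j j z) + 1/4 * (f z * Q j j z * Q j j z))) ν :=
    (i3.const_mul _).add I45
  have I2345 : Integrable (fun z => -1 * (f z * Q i i z * Q i j z)
      + (3/2 * (f z * Q i i z * Q j j z)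
      + (-1 * (f z * Q i j z * Q j j z) + 1/4 * (f z * Q j j z * Q j j z)))) ν :=
    (i2.const_mul _).add I345
  rw [integral_add (i1.const_mul _) I2345,
    integral_add (i2.const_mul _) I345,
    integral_add (i3.const_mul _) I45,
    integral_add (i4.const_mul _) I5,
    integral_const_mul, integral_const_mul, integral_const_mul, integral_const_mul,
    integral_const_mul] at h0
  have hz1 : Tint ν f i i i j = 0 := by
    rw [Tswap14]
    exact Tflip1 ν f hν hfm hfinv hij hij hij
  have hz2 : Tint ν f i j j j = 0 :=
    Tflip1 ν f hν hfm hfinv (fun h : j = i => hij h.symm) (fun h : j = i => hij h.symm)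
      (fun h : j = i => hij h.symm)
  have hz3 : Tint ν f j j j j = Tint ν f i i i i := by
    have := Tperm ν f hν hfm hfinv (Equiv.swap i j) i i i i
    simpa [Equiv.swap_apply_left] using this
  have e1 : Tint ν f i i i i = ∫ z, f z * Q i i z * Q i i z ∂ν := rfl
  have e2 : Tint ν f i i i j = ∫ z, f z * Q i i z * Q i j z ∂ν := rfl
  have e3 : Tint ν f i i j j = ∫ z, f z * Q i i z * Q j j z ∂ν := rfl
  have e4 : Tint ν f i j j j = ∫ z, f z * Q i j z * Q j j z ∂ν := rfl
  have e5 : Tint ν f j j j j = ∫ z, f z * Q j j z * Q j j z ∂ν := rfl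
  rw [← e1, ← e2, ← e3, ← e4, ← e5] at h0
  linarith

end trot

section tmaster
variable {m : ℕ} (ν : Measure (Fin m → ℝ)) [IsProbabilityMeasure ν]
variable (f : (Fin m → ℝ) → ℝ) {C : ℝ}
variable (hν : ∀ O : Matrix (Fin m) (Fin m) ℝ, Oᵀ * O = 1 → ν.map O.mulVec = ν)
variable (hfm : Measurable f)
variable (hfinv : ∀ z w : Fin m → ℝ, z ⬝ᵥ z = w ⬝ᵥ w → f z = f w)
variable (hfb : ∀ z, |f z| ≤ C)

lemma TbEq (hν : ∀ O : Matrix (Fin m) (Fin m) ℝ, Oᵀ * O = 1 → ν.map O.mulVec = ν)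
    (hfm : Measurable f)
    (hfinv : ∀ z w : Fin m → ℝ, z ⬝ᵥ z = w ⬝ᵥ w → f z = f w)
    {p q p' q' : Fin m} (hpq : p ≠ q) (hpq' : p' ≠ q') :
    Tint ν f p p q q = Tint ν f p' p' q' q' := by
  obtain ⟨σ, h1, h2⟩ := exists_perm_pair hpq hpq'
  have := Tperm ν f hν hfm hfinv σ p p q q
  rw [h1, h2] at this
  exact this.symm

lemma Tb_val (hν : ∀ O : Matrix (Fin m) (Fin m) ℝ, Oᵀ * O = 1 → ν.map O.mulVec = ν)
    (hfm : Measurable f)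
    (hfinv : ∀ z w : Fin m → ℝ, z ⬝ᵥ z = w ⬝ᵥ w → f z = f w)
    (hfb : ∀ z, |f z| ≤ C) (hm : 1 < m)
    {p q : Fin m} (hpq : p ≠ q) :
    Tint ν f p p q q = Iint ν f / (m * (m + 2)) := by
  have h0m : 0 < m := lt_trans one_pos hm
  set i0 : Fin m := ⟨0, h0m⟩ with hi0
  set j0 : Fin m := ⟨1, hm⟩ with hj0
  have hij0 : i0 ≠ j0 := by
    intro h
    simpa [hi0, hj0, Fin.ext_iff] using h
  set B := Tint ν f i0 i0 j0 j0 with hB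
  have htr := Ttrace ν f hν hfm hfb i0 i0
  have hJ := Jdiag ν f hν hfm hfinv hfb i0
  have hsplit : ∑ r, Tint ν f i0 i0 r r
      = Tint ν f i0 i0 i0 i0 + ∑ r ∈ Finset.univ.erase i0, Tint ν f i0 i0 r r := by
    exact (Finset.add_sum_erase Finset.univ (fun r => Tint ν f i0 i0 r r)
      (Finset.mem_univ i0)).symm
  have ha : Tint ν f i0 i0 i0 i0 = 3 * B :=
    Trot ν f hν hfm hfinv hfb hij0
  have hrest : ∀ r ∈ Finset.univ.erase i0, Tint ν f i0 i0 r r = B := by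
    intro r hr
    exact TbEq ν f hν hfm hfinv (fun h => (Finset.mem_erase.mp hr).1 h.symm) hij0
  rw [hsplit, ha, Finset.sum_congr rfl hrest, Finset.sum_const, Finset.card_erase_of_mem
    (Finset.mem_univ i0), Finset.card_univ, Fintype.card_fin, nsmul_eq_mul] at htr
  rw [hJ] at htr
  have hcast : ((m - 1 : ℕ) : ℝ) = (m : ℝ) - 1 := by
    rw [Nat.cast_sub (Nat.one_le_iff_ne_zero.mpr h0m.ne')]
    simp
  rw [hcast] at htr
  have hmne : (m : ℝ) ≠ 0 := Nat.cast_ne_zero.mpr h0m.ne'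
  have h2ne : (m : ℝ) + 2 ≠ 0 := by positivity
  have hbeq : Tint ν f p p q q = B := TbEq ν f hν hfm hfinv hpq hij0
  rw [hbeq, eq_div_iff (mul_ne_zero hmne h2ne)]
  have h2 : (m:ℝ) * (3 * B + ((m:ℝ) - 1) * B) = Iint ν f := by
    rw [htr, mul_div_cancel₀ _ hmne]
  linear_combination h2

lemma Ta_val (hν : ∀ O : Matrix (Fin m) (Fin m) ℝ, Oᵀ * O = 1 → ν.map O.mulVec = ν)
    (hfm : Measurable f)
    (hfinv : ∀ z w : Fin m → ℝ, z ⬝ᵥ z = w ⬝ᵥ w → f z = f w)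
    (hfb : ∀ z, |f z| ≤ C) (hm : 1 < m) (p : Fin m) :
    Tint ν f p p p p = 3 * (Iint ν f / (m * (m + 2))) := by
  have : Nontrivial (Fin m) := Fin.nontrivial_iff_two_le.mpr hm
  obtain ⟨q, hq⟩ := exists_ne p
  rw [Trot ν f hν hfm hfinv hfb (Ne.symm hq : p ≠ q),
    Tb_val ν f hν hfm hfinv hfb hm (Ne.symm hq : p ≠ q)]

lemma Tmaster (hν : ∀ O : Matrix (Fin m) (Fin m) ℝ, Oᵀ * O = 1 → ν.map O.mulVec = ν)
    (hfm : Measurable f)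
    (hfinv : ∀ z w : Fin m → ℝ, z ⬝ᵥ z = w ⬝ᵥ w → f z = f w)
    (hfb : ∀ z, |f z| ≤ C) (hm : 1 < m) (p q r s : Fin m) :
    Tint ν f p q r s = ((if p = q then (1:ℝ) else 0) * (if r = s then (1:ℝ) else 0)
      + (if p = r then (1:ℝ) else 0) * (if q = s then (1:ℝ) else 0)
      + (if p = s then (1:ℝ) else 0) * (if q = r then (1:ℝ) else 0))
      * (Iint ν f / (m * (m + 2))) := by
  by_cases hpq : p = q
  · subst hpq
    by_cases hrs : r = s
    · subst hrs
      by_cases hpr : p = r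
      · subst hpr
        rw [Ta_val ν f hν hfm hfinv hfb hm p]
        simp only [eq_self_iff_true, if_true, if_pos rfl]
        ring
      · rw [Tb_val ν f hν hfm hfinv hfb hm hpr]
        simp only [eq_self_iff_true, if_true, if_pos rfl, if_neg hpr]
        ring
    · by_cases hpr : p = r
      · subst hpr
        have hz : Tint ν f p p p s = 0 := by
          rw [Tswap14]
          exact Tflip1 ν f hν hfm hfinv (fun h : p = s => hrs h) (fun h : p = s => hrs h)
            (fun h : p = s => hrs h)
        rw [hz]
        simp only [eq_self_iff_true, if_true, if_pos rfl, if_neg hrs]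
        ring
      · have hz : Tint ν f p p r s = 0 := by
          rw [Tswap13]
          exact Tflip1 ν f hν hfm hfinv hpr hpr (fun h : s = r => hrs h.symm)
        rw [hz]
        simp only [eq_self_iff_true, if_true, if_pos rfl, if_neg hrs, if_neg hpr]
        ring
  · by_cases hpr : p = r
    · subst hpr
      by_cases hqs : q = s
      · subst hqs
        rw [Tswap23, Tb_val ν f hν hfm hfinv hfb hm hpq]
        simp only [eq_self_iff_true, if_true, if_pos rfl, if_neg hpq, if_neg (fun h : q = p => hpq h.symm)]
        ring
      · have hz : Tint ν f p q p s = 0 := by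
          rw [Tswap12]
          exact Tflip1 ν f hν hfm hfinv (fun h : p = q => hpq h) (fun h : p = q => hpq h)
            (fun h : s = q => hqs h.symm)
        rw [hz]
        simp only [eq_self_iff_true, if_true, if_neg hpq, if_neg hqs,
          if_neg (fun h : q = p => hpq h.symm)]
        ring
    · by_cases hps : p = s
      · subst hps
        by_cases hqr : q = r
        · subst hqr
          rw [Tswap24, Tb_val ν f hν hfm hfinv hfb hm hpq]
          simp only [eq_self_iff_true, if_true, if_neg hpq, if_neg hpr,
            if_neg (fun h : q = p => hpq h.symm)]
          ring
        · have hz : Tint ν f p q r p = 0 := by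
            rw [Tswap13]
            exact Tflip1 ν f hν hfm hfinv (fun h : q = r => hqr h) hpr hpr
          rw [hz]
          simp only [eq_self_iff_true, if_true, if_pos rfl, if_neg hpq, if_neg hpr, if_neg hqr,
            if_neg (fun h : r = p => hpr h.symm)]
          ring
      · have hz : Tint ν f p q r s = 0 :=
          Tflip1 ν f hν hfm hfinv (fun h : q = p => hpq h.symm) (fun h : r = p => hpr h.symm)
            (fun h : s = p => hps h.symm)
        rw [hz]
        simp only [if_neg hpq, if_neg hpr, if_neg hps]
        ring

end tmaster

section collapse
variable {m : ℕ} (ν : Measure (Fin m → ℝ)) [IsProbabilityMeasure ν]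
variable (f : (Fin m → ℝ) → ℝ) {C : ℝ}

lemma sum2fac (a b e : Fin m → ℝ) (F u : ℝ) :
    ∑ p, ∑ q, a p * b q * (F * (e p * e q * u))
      = F * ((∑ p, a p * e p) * (∑ q, b q * e q) * u) := by
  have L2 : ∀ p, ∑ q, a p * b q * (F * (e p * e q * u))
      = (a p * e p) * (F * u) * ∑ q, b q * e q := by
    intro p
    rw [Finset.mul_sum]
    exact Finset.sum_congr rfl fun q _ => by ring
  rw [Finset.sum_congr rfl fun p _ => L2 p, ← Finset.sum_mul, ← Finset.sum_mul]
  ring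

lemma sum4fac (a b c d e : Fin m → ℝ) (F u : ℝ) :
    ∑ p, ∑ q, ∑ r, ∑ s, a p * b q * (c r * d s) * (F * (e p * e q * u) * (e r * e s * u))
      = F * ((∑ p, a p * e p) * (∑ q, b q * e q) * u)
          * ((∑ r, c r * e r) * (∑ s, d s * e s) * u) := by
  have L4 : ∀ p q r, ∑ s, a p * b q * (c r * d s) * (F * (e p * e q * u) * (e r * e s * u))
      = a p * b q * (F * (e p * e q * u)) * u * (c r * e r) * ∑ s, d s * e s := by
    intro p q r
    rw [Finset.mul_sum]
    exact Finset.sum_congr rfl fun s _ => by ring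
  have L3 : ∀ p q, ∑ r, (a p * b q * (F * (e p * e q * u)) * u * (c r * e r)
        * ∑ s, d s * e s)
      = a p * b q * (F * (e p * e q * u)) * u * (∑ s, d s * e s) * ∑ r, c r * e r := by
    intro p q
    rw [Finset.mul_sum]
    exact Finset.sum_congr rfl fun r _ => by ring
  have L2 : ∀ p, ∑ q, (a p * b q * (F * (e p * e q * u)) * u * (∑ s, d s * e s)
        * ∑ r, c r * e r)
      = (a p * e p) * (F * u * u) * (∑ s, d s * e s) * (∑ r, c r * e r)
        * ∑ q, b q * e q := by
    intro p
    rw [Finset.mul_sum]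
    exact Finset.sum_congr rfl fun q _ => by ring
  rw [Finset.sum_congr rfl fun p _ => Finset.sum_congr rfl fun q _ =>
    Finset.sum_congr rfl fun r _ => L4 p q r]
  rw [Finset.sum_congr rfl fun p _ => Finset.sum_congr rfl fun q _ => L3 p q]
  rw [Finset.sum_congr rfl fun p _ => L2 p, ← Finset.sum_mul, ← Finset.sum_mul,
    ← Finset.sum_mul, ← Finset.sum_mul]
  ring

lemma AAT (A : Matrix (Fin m) (Fin m) ℝ) (i j : Fin m) :
    (A * Aᵀ) i j = ∑ p, A i p * A j p := by
  rw [Matrix.mul_apply]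
  exact Finset.sum_congr rfl fun p _ => by rw [Matrix.transpose_apply]

lemma LemB (hν : ∀ O : Matrix (Fin m) (Fin m) ℝ, Oᵀ * O = 1 → ν.map O.mulVec = ν)
    (hfm : Measurable f)
    (hfinv : ∀ z w : Fin m → ℝ, z ⬝ᵥ z = w ⬝ᵥ w → f z = f w)
    (hfb : ∀ z, |f z| ≤ C) (A : Matrix (Fin m) (Fin m) ℝ) (i j : Fin m) :
    ∫ z, f z * ((A.mulVec z) i * (A.mulVec z) j * (z ⬝ᵥ z)⁻¹) ∂ν
      = (A * Aᵀ) i j * (Iint ν f / m) := by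
  have hpt : (fun z => f z * ((A.mulVec z) i * (A.mulVec z) j * (z ⬝ᵥ z)⁻¹))
      = fun z => ∑ p, ∑ q, A i p * A j q * (f z * Q p q z) := by
    funext z
    unfold Q
    simp only [Matrix.mulVec, dotProduct]
    exact (sum2fac (A i) (A j) z (f z) (∑ x, z x * z x)⁻¹).symm
  rw [hpt, integral_finset_sum _ (fun p _ => integrable_finset_sum _
    (fun q _ => (integrable_fQ ν f hfm hfb p q).const_mul _))]
  have h1 : ∀ p, ∫ z, ∑ q, A i p * A j q * (f z * Q p q z) ∂ν
      = ∑ q, A i p * A j q * Jint ν f p q := by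
    intro p
    rw [integral_finset_sum _ (fun q _ => (integrable_fQ ν f hfm hfb p q).const_mul _)]
    exact Finset.sum_congr rfl fun q _ => integral_const_mul _ _
  rw [Finset.sum_congr rfl fun p _ => h1 p]
  have hcol : ∀ p, ∑ q, A i p * A j q * Jint ν f p q = A i p * A j p * (Iint ν f / m) := by
    intro p
    have hterm : ∀ q, A i p * A j q * Jint ν f p q
        = if p = q then A i p * A j q * (Iint ν f / m) else 0 := by
      intro q
      rw [Jmaster ν f hν hfm hfinv hfb p q]
      by_cases h : p = q <;> simp [h]
    rw [Finset.sum_congr rfl fun q _ => hterm q,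
      Finset.sum_ite_eq Finset.univ p (fun q => A i p * A j q * (Iint ν f / m))]
    simp
  rw [Finset.sum_congr rfl fun p _ => hcol p, AAT, Finset.sum_mul]

set_option maxHeartbeats 2000000 in
lemma LemA (hν : ∀ O : Matrix (Fin m) (Fin m) ℝ, Oᵀ * O = 1 → ν.map O.mulVec = ν)
    (hfm : Measurable f)
    (hfinv : ∀ z w : Fin m → ℝ, z ⬝ᵥ z = w ⬝ᵥ w → f z = f w)
    (hfb : ∀ z, |f z| ≤ C) (hm : 1 < m)
    (A : Matrix (Fin m) (Fin m) ℝ) (i j k l : Fin m) :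
    ∫ z, f z * ((A.mulVec z) i * (A.mulVec z) j * (z ⬝ᵥ z)⁻¹)
        * ((A.mulVec z) k * (A.mulVec z) l * (z ⬝ᵥ z)⁻¹) ∂ν
      = ((A * Aᵀ) i j * (A * Aᵀ) k l + (A * Aᵀ) i k * (A * Aᵀ) j l
          + (A * Aᵀ) i l * (A * Aᵀ) j k) * (Iint ν f / (m * (m + 2))) := by
  set D := Iint ν f / (m * (m + 2)) with hD
  have hpt : (fun z => f z * ((A.mulVec z) i * (A.mulVec z) j * (z ⬝ᵥ z)⁻¹)
        * ((A.mulVec z) k * (A.mulVec z) l * (z ⬝ᵥ z)⁻¹))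
      = fun z => ∑ p, ∑ q, ∑ r, ∑ s,
          A i p * A j q * (A k r * A l s) * (f z * Q p q z * Q r s z) := by
    funext z
    unfold Q
    simp only [Matrix.mulVec, dotProduct]
    exact (sum4fac (A i) (A j) (A k) (A l) z (f z) (∑ x, z x * z x)⁻¹).symm
  rw [hpt]
  rw [integral_finset_sum _ (fun p _ => integrable_finset_sum _ (fun q _ =>
    integrable_finset_sum _ (fun r _ => integrable_finset_sum _ (fun s _ =>
      (integrable_fQQ ν f hfm hfb p q r s).const_mul _))))]
  have h1 : ∀ p, ∫ z, ∑ q, ∑ r, ∑ s,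
      A i p * A j q * (A k r * A l s) * (f z * Q p q z * Q r s z) ∂ν
      = ∑ q, ∑ r, ∑ s, A i p * A j q * (A k r * A l s) * Tint ν f p q r s := by
    intro p
    rw [integral_finset_sum _ (fun q _ => integrable_finset_sum _ (fun r _ =>
      integrable_finset_sum _ (fun s _ => (integrable_fQQ ν f hfm hfb p q r s).const_mul _)))]
    apply Finset.sum_congr rfl; intro q _
    rw [integral_finset_sum _ (fun r _ =>
      integrable_finset_sum _ (fun s _ => (integrable_fQQ ν f hfm hfb p q r s).const_mul _))]
    apply Finset.sum_congr rfl; intro r _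
    rw [integral_finset_sum _ (fun s _ => (integrable_fQQ ν f hfm hfb p q r s).const_mul _)]
    exact Finset.sum_congr rfl fun s _ => integral_const_mul _ _
  rw [Finset.sum_congr rfl fun p _ => h1 p]
  have habs : ∀ (C1 C2 C3 C4 C5 C6 : Prop) (_ : Decidable C1) (_ : Decidable C2)
      (_ : Decidable C3) (_ : Decidable C4) (_ : Decidable C5) (_ : Decidable C6) (X Y : ℝ),
      Y * (((if C1 then (1:ℝ) else 0) * (if C2 then (1:ℝ) else 0)
          + (if C3 then (1:ℝ) else 0) * (if C4 then (1:ℝ) else 0)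
          + (if C5 then (1:ℝ) else 0) * (if C6 then (1:ℝ) else 0)) * X)
        = (if C2 then (if C1 then Y * X else 0) else 0)
          + ((if C4 then (if C3 then Y * X else 0) else 0)
          + (if C5 then (if C6 then Y * X else 0) else 0)) := by
    intros C1 C2 C3 C4 C5 C6 d1 d2 d3 d4 d5 d6 X Y
    by_cases h1' : C1 <;> by_cases h2' : C2 <;> by_cases h3' : C3 <;> by_cases h4' : C4 <;>
      by_cases h5' : C5 <;> by_cases h6' : C6 <;>
      simp only [h1', h2', h3', h4', h5', h6', if_true, if_false] <;> ring
  have h2 : ∀ p q r s, A i p * A j q * (A k r * A l s) * Tint ν f p q r s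
      = (if r = s then (if p = q then A i p * A j q * (A k r * A l s) * D else 0) else 0)
        + ((if q = s then (if p = r then A i p * A j q * (A k r * A l s) * D else 0) else 0)
        + (if p = s then (if q = r then A i p * A j q * (A k r * A l s) * D else 0) else 0)) := by
    intro p q r s
    rw [Tmaster ν f hν hfm hfinv hfb hm p q r s, ← hD]
    exact habs (p = q) (r = s) (p = r) (q = s) (p = s) (q = r) _ _ _ _ _ _ D
      (A i p * A j q * (A k r * A l s))
  simp only [h2]
  simp only [Finset.sum_add_distrib]
  have hterm1 : ∑ p, ∑ q, ∑ r, ∑ s,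
      (if r = s then (if p = q then A i p * A j q * (A k r * A l s) * D else 0) else 0)
      = (A * Aᵀ) i j * (A * Aᵀ) k l * D := by
    have hs : ∀ p q r, ∑ s, (if r = s then (if p = q then A i p * A j q * (A k r * A l s) * D
          else 0) else 0)
        = (if p = q then A i p * A j q * (A k r * A l r) * D else 0) := by
      intro p q r
      rw [Finset.sum_ite_eq Finset.univ r
        (fun s => if p = q then A i p * A j q * (A k r * A l s) * D else 0)]
      simp
    rw [Finset.sum_congr rfl fun p _ => Finset.sum_congr rfl fun q _ =>
      Finset.sum_congr rfl fun r _ => hs p q r]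
    have hq : ∀ p, ∑ q, ∑ r, (if p = q then A i p * A j q * (A k r * A l r) * D else 0)
        = ∑ r, A i p * A j p * (A k r * A l r) * D := by
      intro p
      rw [Finset.sum_comm]
      apply Finset.sum_congr rfl; intro r _
      rw [Finset.sum_ite_eq Finset.univ p (fun q => A i p * A j q * (A k r * A l r) * D)]
      simp
    rw [Finset.sum_congr rfl fun p _ => hq p]
    have hx : ∀ p, ∑ r, A i p * A j p * (A k r * A l r) * D
        = (A i p * A j p * D) * ∑ r, A k r * A l r := by
      intro p
      rw [Finset.mul_sum]
      exact Finset.sum_congr rfl fun r _ => by ring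
    rw [Finset.sum_congr rfl fun p _ => hx p, ← Finset.sum_mul, ← Finset.sum_mul, AAT, AAT]
    ring
  have hterm2 : ∑ p, ∑ q, ∑ r, ∑ s,
      (if q = s then (if p = r then A i p * A j q * (A k r * A l s) * D else 0) else 0)
      = (A * Aᵀ) i k * (A * Aᵀ) j l * D := by
    have hs : ∀ p q r, ∑ s, (if q = s then (if p = r then A i p * A j q * (A k r * A l s) * D
          else 0) else 0)
        = (if p = r then A i p * A j q * (A k r * A l q) * D else 0) := by
      intro p q r
      rw [Finset.sum_ite_eq Finset.univ q
        (fun s => if p = r then A i p * A j q * (A k r * A l s) * D else 0)]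
      simp
    rw [Finset.sum_congr rfl fun p _ => Finset.sum_congr rfl fun q _ =>
      Finset.sum_congr rfl fun r _ => hs p q r]
    have hr : ∀ p q, ∑ r, (if p = r then A i p * A j q * (A k r * A l q) * D else 0)
        = A i p * A j q * (A k p * A l q) * D := by
      intro p q
      rw [Finset.sum_ite_eq Finset.univ p (fun r => A i p * A j q * (A k r * A l q) * D)]
      simp
    rw [Finset.sum_congr rfl fun p _ => Finset.sum_congr rfl fun q _ => hr p q]
    have hx : ∀ p, ∑ q, A i p * A j q * (A k p * A l q) * D
        = (A i p * A k p * D) * ∑ q, A j q * A l q := by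
      intro p
      rw [Finset.mul_sum]
      exact Finset.sum_congr rfl fun q _ => by ring
    rw [Finset.sum_congr rfl fun p _ => hx p, ← Finset.sum_mul, ← Finset.sum_mul, AAT, AAT]
    ring
  have hterm3 : ∑ p, ∑ q, ∑ r, ∑ s,
      (if p = s then (if q = r then A i p * A j q * (A k r * A l s) * D else 0) else 0)
      = (A * Aᵀ) i l * (A * Aᵀ) j k * D := by
    have hs : ∀ p q r, ∑ s, (if p = s then (if q = r then A i p * A j q * (A k r * A l s) * D
          else 0) else 0)
        = (if q = r then A i p * A j q * (A k r * A l p) * D else 0) := by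
      intro p q r
      rw [Finset.sum_ite_eq Finset.univ p
        (fun s => if q = r then A i p * A j q * (A k r * A l s) * D else 0)]
      simp
    rw [Finset.sum_congr rfl fun p _ => Finset.sum_congr rfl fun q _ =>
      Finset.sum_congr rfl fun r _ => hs p q r]
    have hr : ∀ p q, ∑ r, (if q = r then A i p * A j q * (A k r * A l p) * D else 0)
        = A i p * A j q * (A k q * A l p) * D := by
      intro p q
      rw [Finset.sum_ite_eq Finset.univ q (fun r => A i p * A j q * (A k r * A l p) * D)]
      simp
    rw [Finset.sum_congr rfl fun p _ => Finset.sum_congr rfl fun q _ => hr p q]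
    have hx : ∀ p, ∑ q, A i p * A j q * (A k q * A l p) * D
        = (A i p * A l p * D) * ∑ q, A j q * A k q := by
      intro p
      rw [Finset.mul_sum]
      exact Finset.sum_congr rfl fun q _ => by ring
    rw [Finset.sum_congr rfl fun p _ => hx p, ← Finset.sum_mul, ← Finset.sum_mul, AAT, AAT]
    ring
  rw [hterm1, hterm2, hterm3]
  ring

end collapse



lemma rho_cont {ρ : ℝ → ℝ} {c : ℝ} (h : IsRhoFunction ρ c) : Continuous ρ :=
  h.2.2.1.continuous

lemma rho_deriv_cont {ρ : ℝ → ℝ} {c : ℝ} (h : IsRhoFunction ρ c) :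
    Continuous (deriv ρ) :=
  h.2.2.1.continuous_deriv one_le_two

lemma rho_deriv_eq_zero {ρ : ℝ → ℝ} {c : ℝ} (h : IsRhoFunction ρ c) {u : ℝ} (hu : c < u) :
    deriv ρ u = 0 := by
  have hev : ρ =ᶠ[nhds u] fun _ => ρ c := by
    filter_upwards [Ioi_mem_nhds hu] with v hv
    exact h.2.2.2.2.2 v (le_of_lt hv)
  rw [hev.deriv_eq]
  exact deriv_const u _

/-- bound for `deriv ρ u * u` on `[0, ∞)` -/
lemma rho_psi_bound {ρ : ℝ → ℝ} {c : ℝ} (h : IsRhoFunction ρ c) :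
    ∃ K : ℝ, ∀ u : ℝ, 0 ≤ u → |deriv ρ u * u| ≤ K := by
  obtain ⟨K, hK⟩ := (isCompact_Icc (a := (0:ℝ)) (b := c)).exists_bound_of_continuousOn
    (((rho_deriv_cont h).mul continuous_id).continuousOn)
  refine ⟨max K 0, fun u hu => ?_⟩
  by_cases hc : u ≤ c
  · exact le_max_of_le_left (hK u ⟨hu, hc⟩)
  · rw [rho_deriv_eq_zero h (lt_of_not_ge hc), zero_mul, abs_zero]
    exact le_max_right _ _

/-- bound for `ρ u` on `[0, ∞)` -/
lemma rho_bound {ρ : ℝ → ℝ} {c : ℝ} (h : IsRhoFunction ρ c) :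
    ∃ K : ℝ, ∀ u : ℝ, 0 ≤ u → |ρ u| ≤ K := by
  obtain ⟨K, hK⟩ := (isCompact_Icc (a := (0:ℝ)) (b := c)).exists_bound_of_continuousOn
    (rho_cont h).continuousOn
  refine ⟨max K 0, fun u hu => ?_⟩
  by_cases hc : u ≤ c
  · exact le_max_of_le_left (hK u ⟨hu, hc⟩)
  · rw [h.2.2.2.2.2 u (le_of_lt (lt_of_not_ge hc))]
    exact le_max_of_le_left (hK c ⟨le_of_lt h.1, le_refl c⟩)

lemma key_matrix {m : ℕ} {A Sig : Matrix (Fin m) (Fin m) ℝ} (hSig : Sig.PosDef)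
    (hA : A * Aᵀ = Sig) : Aᵀ * (Sig⁻¹ * A) = 1 := by
  have hdetS : Sig.det ≠ 0 := hSig.det_pos.ne'
  have hdetA : IsUnit A.det := by
    apply isUnit_iff_ne_zero.mpr
    intro h0
    apply hdetS
    rw [← hA, Matrix.det_mul, h0, zero_mul]
  have hdetAT : IsUnit Aᵀ.det := by rwa [Matrix.det_transpose]
  rw [← hA, Matrix.mul_inv_rev]
  calc Aᵀ * (Aᵀ⁻¹ * A⁻¹ * A) = Aᵀ * (Aᵀ⁻¹ * (A⁻¹ * A)) := by rw [Matrix.mul_assoc]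
    _ = Aᵀ * Aᵀ⁻¹ := by rw [Matrix.nonsing_inv_mul A hdetA, Matrix.mul_one]
    _ = 1 := Matrix.mul_nonsing_inv Aᵀ hdetAT

lemma mnorm_mulVec {m : ℕ} {A Sig : Matrix (Fin m) (Fin m) ℝ} (hSig : Sig.PosDef)
    (hA : A * Aᵀ = Sig) (z : Fin m → ℝ) :
    mnorm Sig (A.mulVec z) = Real.sqrt (z ⬝ᵥ z) := by
  unfold mnorm
  congr 1
  rw [Matrix.mulVec_mulVec]
  conv_lhs => rw [← Matrix.vecMul_transpose]
  rw [Matrix.dotProduct_mulVec, Matrix.vecMul_vecMul, key_matrix hSig hA,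
    Matrix.vecMul_one]


section xbound
variable {m : ℕ}

lemma abs_mul_le2 {a b Ca Cb : ℝ} (ha : |a| ≤ Ca) (hb : |b| ≤ Cb) : |a * b| ≤ Ca * Cb := by
  rw [abs_mul]
  exact mul_le_mul ha hb (abs_nonneg _) (le_trans (abs_nonneg _) ha)

lemma X_repr (A : Matrix (Fin m) (Fin m) ℝ) (i j : Fin m) (z : Fin m → ℝ) :
    (A.mulVec z) i * (A.mulVec z) j * (z ⬝ᵥ z)⁻¹
      = ∑ p, ∑ q, A i p * A j q * Q p q z := by
  unfold Q
  simp only [Matrix.mulVec, dotProduct]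
  have := sum2fac (A i) (A j) z 1 (∑ x, z x * z x)⁻¹
  simp only [one_mul] at this
  exact this.symm

lemma X_bound (A : Matrix (Fin m) (Fin m) ℝ) (i j : Fin m) (z : Fin m → ℝ) :
    |(A.mulVec z) i * (A.mulVec z) j * (z ⬝ᵥ z)⁻¹| ≤ ∑ p, ∑ q, |A i p * A j q| := by
  rw [X_repr]
  refine (Finset.abs_sum_le_sum_abs _ _).trans ?_
  apply Finset.sum_le_sum; intro p _
  refine (Finset.abs_sum_le_sum_abs _ _).trans ?_
  apply Finset.sum_le_sum; intro q _
  exact abs_mul_le_of_le_one (le_refl _) (abs_Q_le_one p q z)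

lemma measurable_X (A : Matrix (Fin m) (Fin m) ℝ) (i j : Fin m) :
    Measurable (fun z : Fin m → ℝ => (A.mulVec z) i * (A.mulVec z) j * (z ⬝ᵥ z)⁻¹) := by
  apply Measurable.mul
  apply Measurable.mul
  · exact (measurable_pi_apply i).comp (measurable_mulVec A)
  · exact (measurable_pi_apply j).comp (measurable_mulVec A)
  · exact measurable_dot.inv

end xbound

end MMaux

/-- **Asymptotic variance of the MM scatter estimator in the SUR model**
(Theorem 2, scatter part):
`E[vec(M(E)) vec(M(E))ᵀ] = σ₁ (I + K_m)(Σ ⊗ Σ) + σ₂ vec(Σ) vec(Σ)ᵀ`. -/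
theorem asymptotic_variance_MM_scatter
    {m : ℕ} (hm : 1 < m)
    (ρ₀ ρ₁ : ℝ → ℝ) (c₀ c₁ : ℝ)
    (hρ₀ : IsRhoFunction ρ₀ c₀) (hρ₁ : IsRhoFunction ρ₁ c₁)
    (δ₀ : ℝ) (hδ : 0 < δ₀ ∧ δ₀ < ρ₀ c₀)
    (Sig : Matrix (Fin m) (Fin m) ℝ) (hSig : Sig.PosDef)
    -- the elliptically symmetric error law F
    (ν : Measure (Fin m → ℝ)) [IsProbabilityMeasure ν] (hν : OrthoInvariant ν)
    (A : Matrix (Fin m) (Fin m) ℝ) (hA : A * Aᵀ = Sig)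
    (F : Measure (Fin m → ℝ)) (hF : F = ν.map A.mulVec)
    -- γ₀ ≠ 0 and π₁ ≠ 0
    (γ₀ : ℝ) (hγ : γ₀ = ∫ e, deriv ρ₀ (mnorm Sig e) * mnorm Sig e ∂F) (hγ0 : γ₀ ≠ 0)
    (π₁ : ℝ)
    (hπ : π₁ = (1 / ((m : ℝ) + 2)) * ∫ e, (((m : ℝ) + 1) * deriv ρ₁ (mnorm Sig e) * mnorm Sig e
        + deriv (deriv ρ₁) (mnorm Sig e) * mnorm Sig e ^ 2) ∂F)
    (hπ0 : π₁ ≠ 0)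
    -- the influence-function matrix M(e); for e = 0 this formula gives (2/γ₀)(−δ₀)Σ
    (M : (Fin m → ℝ) → Matrix (Fin m) (Fin m) ℝ)
    (hM : ∀ e, M e = (((m : ℝ) / π₁) * deriv ρ₁ (mnorm Sig e) * mnorm Sig e) •
        (((mnorm Sig e) ^ 2)⁻¹ • vecMulVec e e - ((m : ℝ))⁻¹ • Sig)
      + ((2 / γ₀) * (ρ₀ (mnorm Sig e) - δ₀)) • Sig)
    -- the commutation matrix K_m, determined by K_m vec(A) = vec(Aᵀ)
    (Km : Matrix (Fin m × Fin m) (Fin m × Fin m) ℝ)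
    (hKm : ∀ B : Matrix (Fin m) (Fin m) ℝ, Km.mulVec (vecm B) = vecm Bᵀ)
    -- the constants σ₁ and σ₂
    (σ₁ σ₂ : ℝ)
    (hσ₁ : σ₁ = ((m : ℝ) / (π₁ ^ 2 * ((m : ℝ) + 2))) *
      ∫ e, (deriv ρ₁ (mnorm Sig e)) ^ 2 * (mnorm Sig e) ^ 2 ∂F)
    (hσ₂ : σ₂ = (4 / γ₀ ^ 2) * (∫ e, (ρ₀ (mnorm Sig e) - δ₀) ^ 2 ∂F) - (2 / (m : ℝ)) * σ₁) :
    (Matrix.of fun q r : Fin m × Fin m => ∫ e, vecm (M e) q * vecm (M e) r ∂F) =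
      σ₁ • ((1 + Km) * (Sig ⊗ₖ Sig)) + σ₂ • vecMulVec (vecm Sig) (vecm Sig) := by
  classical
  subst hF
  obtain ⟨ψK1, hψK1⟩ := MMaux.rho_psi_bound hρ₁
  obtain ⟨ρK0, hρK0⟩ := MMaux.rho_bound hρ₀
  have hm0 : 0 < m := lt_trans one_pos hm
  have hmne : (m : ℝ) ≠ 0 := Nat.cast_ne_zero.mpr hm0.ne'
  have hm2ne : (m : ℝ) + 2 ≠ 0 := by positivity
  have hνO : ∀ O : Matrix (Fin m) (Fin m) ℝ, Oᵀ * O = 1 → ν.map O.mulVec = ν := hν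
  -- scalar functions on the ν side
  set r : (Fin m → ℝ) → ℝ := fun z => Real.sqrt (z ⬝ᵥ z) with hrdef
  set sfun : (Fin m → ℝ) → ℝ := fun z => ((m : ℝ) / π₁) * deriv ρ₁ (r z) * r z with hsdef
  set tfun : (Fin m → ℝ) → ℝ := fun z => (2 / γ₀) * (ρ₀ (r z) - δ₀) with htdef
  set f1 : (Fin m → ℝ) → ℝ := fun z => sfun z * sfun z with hf1def
  set f2 : (Fin m → ℝ) → ℝ := fun z => sfun z * tfun z with hf2def
  set f3 : (Fin m → ℝ) → ℝ := fun z => tfun z * tfun z with hf3def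
  have hrm : Measurable r := Real.continuous_sqrt.measurable.comp MMaux.measurable_dot
  have hsm : Measurable sfun :=
    ((measurable_const.mul ((MMaux.rho_deriv_cont hρ₁).measurable.comp hrm)).mul hrm)
  have htm : Measurable tfun :=
    measurable_const.mul (((MMaux.rho_cont hρ₀).measurable.comp hrm).sub measurable_const)
  have hf1m : Measurable f1 := hsm.mul hsm
  have hf2m : Measurable f2 := hsm.mul htm
  have hf3m : Measurable f3 := htm.mul htm
  have hrnn : ∀ z, 0 ≤ r z := fun z => Real.sqrt_nonneg _
  -- bounds
  set Cs : ℝ := |(m : ℝ) / π₁| * ψK1 with hCs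
  set Ct : ℝ := |2 / γ₀| * (ρK0 + |δ₀|) with hCt
  have hsb : ∀ z, |sfun z| ≤ Cs := by
    intro z
    have : sfun z = ((m : ℝ) / π₁) * (deriv ρ₁ (r z) * r z) := by rw [hsdef]; ring
    rw [this, abs_mul]
    exact mul_le_mul_of_nonneg_left (hψK1 (r z) (hrnn z)) (abs_nonneg _)
  have htb : ∀ z, |tfun z| ≤ Ct := by
    intro z
    rw [htdef]
    simp only []
    rw [abs_mul]
    apply mul_le_mul_of_nonneg_left _ (abs_nonneg _)
    calc |ρ₀ (r z) - δ₀| ≤ |ρ₀ (r z)| + |δ₀| := abs_sub _ _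
      _ ≤ ρK0 + |δ₀| := by linarith [hρK0 (r z) (hrnn z)]
  have hf1b : ∀ z, |f1 z| ≤ Cs * Cs := fun z => MMaux.abs_mul_le2 (hsb z) (hsb z)
  have hf2b : ∀ z, |f2 z| ≤ Cs * Ct := fun z => MMaux.abs_mul_le2 (hsb z) (htb z)
  have hf3b : ∀ z, |f3 z| ≤ Ct * Ct := fun z => MMaux.abs_mul_le2 (htb z) (htb z)
  -- invariance under dot-product equality
  have hf1inv : ∀ z w : Fin m → ℝ, z ⬝ᵥ z = w ⬝ᵥ w → f1 z = f1 w := by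
    intro z w h; rw [hf1def]; simp only [hsdef, hrdef, h]
  have hf2inv : ∀ z w : Fin m → ℝ, z ⬝ᵥ z = w ⬝ᵥ w → f2 z = f2 w := by
    intro z w h; rw [hf2def]; simp only [hsdef, htdef, hrdef, h]
  -- sfun vanishes when the norm vanishes
  have hs0 : ∀ z : Fin m → ℝ, z ⬝ᵥ z = 0 → sfun z = 0 := by
    intro z h
    rw [hsdef]
    simp only [hrdef, h, Real.sqrt_zero, mul_zero]
  -- Iint equals plain integral for f1 and f2
  have hI1 : MMaux.Iint ν f1 = ∫ z, f1 z ∂ν := by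
    unfold MMaux.Iint MMaux.chi
    congr 1
    funext z
    by_cases h : z ⬝ᵥ z = 0
    · simp [h, hf1def, hs0 z h]
    · simp [h]
  have hI2 : MMaux.Iint ν f2 = ∫ z, f2 z ∂ν := by
    unfold MMaux.Iint MMaux.chi
    congr 1
    funext z
    by_cases h : z ⬝ᵥ z = 0
    · simp [h, hf2def, hs0 z h]
    · simp [h]
  -- change of variables for bounded measurable functions
  have hmap : ∀ g : (Fin m → ℝ) → ℝ, Measurable g →
      ∫ e, g e ∂(ν.map A.mulVec) = ∫ z, g (A.mulVec z) ∂ν := by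
    intro g hg
    exact integral_map (MMaux.measurable_mulVec A).aemeasurable hg.aestronglyMeasurable
  have hmnormM : Measurable (mnorm Sig) := by
    apply Real.continuous_sqrt.measurable.comp
    apply Finset.measurable_sum
    intro p _
    exact (measurable_pi_apply p).mul
      ((measurable_pi_apply p).comp (MMaux.measurable_mulVec Sig⁻¹))
  have hmnA : ∀ z, mnorm Sig (A.mulVec z) = r z := fun z => MMaux.mnorm_mulVec hSig hA z
  -- σ₁ in terms of E1
  have hJm : Measurable (fun e => (deriv ρ₁ (mnorm Sig e)) ^ 2 * (mnorm Sig e) ^ 2) :=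
    (((MMaux.rho_deriv_cont hρ₁).measurable.comp hmnormM).pow_const 2).mul (hmnormM.pow_const 2)
  have hE1 : MMaux.Iint ν f1 = σ₁ * ((m : ℝ) * ((m : ℝ) + 2)) := by
    rw [hI1, hσ₁, hmap _ hJm]
    have hpt : (fun z => (deriv ρ₁ (mnorm Sig (A.mulVec z))) ^ 2 * (mnorm Sig (A.mulVec z)) ^ 2)
        = fun z => (deriv ρ₁ (r z)) ^ 2 * (r z) ^ 2 := by
      funext z; rw [hmnA z]
    rw [hpt]
    have hpt2 : (fun z => f1 z)
        = fun z => ((m : ℝ) / π₁) ^ 2 * ((deriv ρ₁ (r z)) ^ 2 * (r z) ^ 2) := by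
      funext z
      rw [hf1def]
      simp only [hsdef]
      ring
    rw [hpt2, integral_const_mul]
    field_simp
  -- σ₂ in terms of E3
  have hE3m : Measurable (fun e => (ρ₀ (mnorm Sig e) - δ₀) ^ 2) :=
    ((((MMaux.rho_cont hρ₀).measurable.comp hmnormM).sub measurable_const).pow_const 2)
  have hE3 : (∫ z, f3 z ∂ν) = σ₂ + (2 / (m : ℝ)) * σ₁ := by
    rw [hσ₂, hmap _ hE3m]
    have hpt : (fun z => (ρ₀ (mnorm Sig (A.mulVec z)) - δ₀) ^ 2)
        = fun z => (ρ₀ (r z) - δ₀) ^ 2 := by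
      funext z; rw [hmnA z]
    rw [hpt]
    have hpt2 : (fun z => f3 z) = fun z => (2 / γ₀) ^ 2 * ((ρ₀ (r z) - δ₀) ^ 2) := by
      funext z
      rw [hf3def]
      simp only [htdef]
      ring
    rw [hpt2, integral_const_mul]
    field_simp
    ring
  -- the matrix identity, entrywise
  apply Matrix.ext
  rintro ⟨i, j⟩ ⟨k, l⟩
  -- right-hand side entry
  have hKmE : (Km * (Sig ⊗ₖ Sig)) (i, j) (k, l) = Sig j k * Sig i l := by
    have h1 : (Km * (Sig ⊗ₖ Sig)) (i, j) (k, l)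
        = Km.mulVec (vecm (Matrix.of fun a b => Sig a k * Sig b l)) (i, j) := by
      rw [Matrix.mul_apply]
      unfold Matrix.mulVec dotProduct vecm
      apply Finset.sum_congr rfl
      intro p _
      rw [Matrix.kroneckerMap_apply]
      rfl
    rw [h1, hKm]
    rfl
  -- the function entries of M
  have hMent : ∀ (a b : Fin m) (e : Fin m → ℝ), M e a b
      = (((m : ℝ) / π₁) * deriv ρ₁ (mnorm Sig e) * mnorm Sig e)
          * (((mnorm Sig e) ^ 2)⁻¹ * (e a * e b) - (m : ℝ)⁻¹ * Sig a b)
        + ((2 / γ₀) * (ρ₀ (mnorm Sig e) - δ₀)) * Sig a b := by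
    intro a b e
    rw [hM e]
    simp only [Matrix.add_apply, Matrix.smul_apply, Matrix.sub_apply, Matrix.vecMulVec_apply,
      smul_eq_mul]
  have hMm : ∀ a b : Fin m, Measurable (fun e => M e a b) := by
    intro a b
    have : (fun e => M e a b) = fun e =>
        (((m : ℝ) / π₁) * deriv ρ₁ (mnorm Sig e) * mnorm Sig e)
          * (((mnorm Sig e) ^ 2)⁻¹ * (e a * e b) - (m : ℝ)⁻¹ * Sig a b)
        + ((2 / γ₀) * (ρ₀ (mnorm Sig e) - δ₀)) * Sig a b := funext fun e => hMent a b e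
    rw [this]
    apply Measurable.add
    · apply Measurable.mul
      · exact (measurable_const.mul ((MMaux.rho_deriv_cont hρ₁).measurable.comp hmnormM)).mul
          hmnormM
      · exact ((hmnormM.pow_const 2).inv.mul
          ((measurable_pi_apply a).mul (measurable_pi_apply b))).sub measurable_const
    · exact (measurable_const.mul (((MMaux.rho_cont hρ₀).measurable.comp hmnormM).sub
        measurable_const)).mul measurable_const
  -- left-hand side entry: change variables and compute
  have hLHS : ∫ e, vecm (M e) (i, j) * vecm (M e) (k, l) ∂(ν.map A.mulVec)
      = σ₁ * (Sig i k * Sig j l + Sig i l * Sig j k) + σ₂ * (Sig i j * Sig k l) := by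
    have h0 : ∫ e, vecm (M e) (i, j) * vecm (M e) (k, l) ∂(ν.map A.mulVec)
        = ∫ z, M (A.mulVec z) i j * M (A.mulVec z) k l ∂ν := by
      exact hmap _ ((hMm i j).mul (hMm k l))
    rw [h0]
    -- pointwise expansion
    set X : Fin m → Fin m → (Fin m → ℝ) → ℝ :=
      fun a b z => (A.mulVec z) a * (A.mulVec z) b * (z ⬝ᵥ z)⁻¹ with hXdef
    have hcomb : (fun z => M (A.mulVec z) i j * M (A.mulVec z) k l)
        = fun z => f1 z * X i j z * X k l z
          + ((-(Sig k l) * (m : ℝ)⁻¹) * (f1 z * X i j z)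
          + ((-(Sig i j) * (m : ℝ)⁻¹) * (f1 z * X k l z)
          + (Sig k l * (f2 z * X i j z)
          + (Sig i j * (f2 z * X k l z)
          + (((m : ℝ)⁻¹ * (m : ℝ)⁻¹ * (Sig i j * Sig k l)) * f1 z
          + ((-2 * (m : ℝ)⁻¹ * (Sig i j * Sig k l)) * f2 z
          + (Sig i j * Sig k l) * f3 z)))))) := by
      funext z
      rw [hMent i j _, hMent k l _, hmnA z]
      have hsq : r z ^ 2 = z ⬝ᵥ z := Real.sq_sqrt (MMaux.dot_self_nonneg z)
      rw [hsq]
      simp only [hf1def, hf2def, hf3def, hsdef, htdef, hXdef]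
      ring
    rw [hcomb]
    -- integrability of the pieces
    set BX : Fin m → Fin m → ℝ := fun a b => ∑ p, ∑ q, |A a p * A b q| with hBX
    have hXb : ∀ a b z, |X a b z| ≤ BX a b := fun a b z => MMaux.X_bound A a b z
    have hXm : ∀ a b, Measurable (X a b) := fun a b => MMaux.measurable_X A a b
    have i1 : Integrable (fun z => f1 z * X i j z * X k l z) ν :=
      MMaux.integrable_of_bdd ν ((hf1m.mul (hXm i j)).mul (hXm k l))
        (C := Cs * Cs * BX i j * BX k l)
        (fun z => MMaux.abs_mul_le2 (MMaux.abs_mul_le2 (hf1b z) (hXb i j z)) (hXb k l z))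
    have i2 : Integrable (fun z => f1 z * X i j z) ν :=
      MMaux.integrable_of_bdd ν (hf1m.mul (hXm i j)) (C := Cs * Cs * BX i j)
        (fun z => MMaux.abs_mul_le2 (hf1b z) (hXb i j z))
    have i3 : Integrable (fun z => f1 z * X k l z) ν :=
      MMaux.integrable_of_bdd ν (hf1m.mul (hXm k l)) (C := Cs * Cs * BX k l)
        (fun z => MMaux.abs_mul_le2 (hf1b z) (hXb k l z))
    have i4 : Integrable (fun z => f2 z * X i j z) ν :=
      MMaux.integrable_of_bdd ν (hf2m.mul (hXm i j)) (C := Cs * Ct * BX i j)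
        (fun z => MMaux.abs_mul_le2 (hf2b z) (hXb i j z))
    have i5 : Integrable (fun z => f2 z * X k l z) ν :=
      MMaux.integrable_of_bdd ν (hf2m.mul (hXm k l)) (C := Cs * Ct * BX k l)
        (fun z => MMaux.abs_mul_le2 (hf2b z) (hXb k l z))
    have i6 : Integrable f1 ν := MMaux.integrable_of_bdd ν hf1m hf1b
    have i7 : Integrable f2 ν := MMaux.integrable_of_bdd ν hf2m hf2b
    have i8 : Integrable f3 ν := MMaux.integrable_of_bdd ν hf3m hf3b
    -- split the integral
    have I8 : Integrable (fun z => (Sig i j * Sig k l) * f3 z) ν := i8.const_mul _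
    have I78 : Integrable (fun z => (-2 * (m : ℝ)⁻¹ * (Sig i j * Sig k l)) * f2 z
        + (Sig i j * Sig k l) * f3 z) ν := (i7.const_mul _).add I8
    have I678 : Integrable (fun z => ((m : ℝ)⁻¹ * (m : ℝ)⁻¹ * (Sig i j * Sig k l)) * f1 z
        + ((-2 * (m : ℝ)⁻¹ * (Sig i j * Sig k l)) * f2 z
        + (Sig i j * Sig k l) * f3 z)) ν := (i6.const_mul _).add I78
    have I5678 : Integrable (fun z => Sig i j * (f2 z * X k l z)
        + (((m : ℝ)⁻¹ * (m : ℝ)⁻¹ * (Sig i j * Sig k l)) * f1 z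
        + ((-2 * (m : ℝ)⁻¹ * (Sig i j * Sig k l)) * f2 z
        + (Sig i j * Sig k l) * f3 z))) ν := (i5.const_mul _).add I678
    have I45678 : Integrable (fun z => Sig k l * (f2 z * X i j z)
        + (Sig i j * (f2 z * X k l z)
        + (((m : ℝ)⁻¹ * (m : ℝ)⁻¹ * (Sig i j * Sig k l)) * f1 z
        + ((-2 * (m : ℝ)⁻¹ * (Sig i j * Sig k l)) * f2 z
        + (Sig i j * Sig k l) * f3 z)))) ν := (i4.const_mul _).add I5678
    have I345678 : Integrable (fun z => (-(Sig i j) * (m : ℝ)⁻¹) * (f1 z * X k l z)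
        + (Sig k l * (f2 z * X i j z)
        + (Sig i j * (f2 z * X k l z)
        + (((m : ℝ)⁻¹ * (m : ℝ)⁻¹ * (Sig i j * Sig k l)) * f1 z
        + ((-2 * (m : ℝ)⁻¹ * (Sig i j * Sig k l)) * f2 z
        + (Sig i j * Sig k l) * f3 z))))) ν := (i3.const_mul _).add I45678
    have I2345678 : Integrable (fun z => (-(Sig k l) * (m : ℝ)⁻¹) * (f1 z * X i j z)
        + ((-(Sig i j) * (m : ℝ)⁻¹) * (f1 z * X k l z)
        + (Sig k l * (f2 z * X i j z)
        + (Sig i j * (f2 z * X k l z)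
        + (((m : ℝ)⁻¹ * (m : ℝ)⁻¹ * (Sig i j * Sig k l)) * f1 z
        + ((-2 * (m : ℝ)⁻¹ * (Sig i j * Sig k l)) * f2 z
        + (Sig i j * Sig k l) * f3 z)))))) ν := (i2.const_mul _).add I345678
    rw [integral_add i1 I2345678, integral_add (i2.const_mul _) I345678,
      integral_add (i3.const_mul _) I45678, integral_add (i4.const_mul _) I5678,
      integral_add (i5.const_mul _) I678, integral_add (i6.const_mul _) I78,
      integral_add (i7.const_mul _) I8,
      integral_const_mul, integral_const_mul, integral_const_mul, integral_const_mul,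
      integral_const_mul, integral_const_mul, integral_const_mul]
    -- evaluate each integral
    have eA : ∫ z, f1 z * X i j z * X k l z ∂ν
        = (Sig i j * Sig k l + Sig i k * Sig j l + Sig i l * Sig j k)
          * (MMaux.Iint ν f1 / ((m : ℝ) * ((m : ℝ) + 2))) := by
      have := MMaux.LemA ν f1 hνO hf1m hf1inv hf1b hm A i j k l
      rw [hA] at this
      exact this
    have eB1 : ∫ z, f1 z * X i j z ∂ν = Sig i j * (MMaux.Iint ν f1 / m) := by
      have := MMaux.LemB ν f1 hνO hf1m hf1inv hf1b A i j
      rw [hA] at this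
      exact this
    have eB2 : ∫ z, f1 z * X k l z ∂ν = Sig k l * (MMaux.Iint ν f1 / m) := by
      have := MMaux.LemB ν f1 hνO hf1m hf1inv hf1b A k l
      rw [hA] at this
      exact this
    have eB3 : ∫ z, f2 z * X i j z ∂ν = Sig i j * (MMaux.Iint ν f2 / m) := by
      have := MMaux.LemB ν f2 hνO hf2m hf2inv hf2b A i j
      rw [hA] at this
      exact this
    have eB4 : ∫ z, f2 z * X k l z ∂ν = Sig k l * (MMaux.Iint ν f2 / m) := by
      have := MMaux.LemB ν f2 hνO hf2m hf2inv hf2b A k l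
      rw [hA] at this
      exact this
    rw [eA, eB1, eB2, eB3, eB4, ← hI1, ← hI2, hE1, hE3]
    field_simp
    ring
  -- finish
  show (∫ e, vecm (M e) (i, j) * vecm (M e) (k, l) ∂(ν.map A.mulVec)) = _
  rw [hLHS]
  simp only [Matrix.add_apply, Matrix.smul_apply, smul_eq_mul, Matrix.add_mul, Matrix.one_mul,
    Matrix.vecMulVec_apply, Matrix.kroneckerMap_apply, hKmE]
  unfold vecm
  ring
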